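/- arXiv:2401.12782 — 3 statements merged into one kernel-verified Lean document; each statement's English description precedes it below -/
import Mathlib

section
/- Let a, b, c be integers with a ≡ ±1 (mod 3), b ≡ 9 or 18 (mod 27), c ≡ 0 (mod 81), and b/3^{v_3(b)} ≡ −a (mod 3), and suppose F(x) = x^4 + a·x^3 + b·x + c is irreducible over ℚ with 3·v_3(b) < 2·v_3(c). Then 3 is a common index divisor of K = ℚ(α) (α a root of F), and K is not monogenic. -/
open Polynomial NumberField

noncomputable def zIndex {K : Type} [Field K] [NumberField K] (θ : 𝓞 K) : ℕ :=
  ((Algebra.adjoin ℤ {θ}).toSubring.toAddSubgroup).index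

namespace Stmt5Aux

instance f3 : Fact (Nat.Prime 3) := ⟨by norm_num⟩

noncomputable def toZp {K : Type} [Field K] [NumberField K] (σ : K →ₐ[ℚ] ℚ_[3]) :
    𝓞 K →+* ℤ_[3] where
  toFun x := ⟨σ x, by
    have hx : IsIntegral ℤ (x : K) := x.isIntegral_coe
    have h2 : IsIntegral ℤ (σ (x : K)) := hx.map σ.toRingHom.toIntAlgHom
    obtain ⟨y, hy⟩ := IsIntegrallyClosed.isIntegral_iff.mp (h2.tower_top (A := ℤ_[3]))
    rw [← hy]; exact y.2⟩
  map_one' := Subtype.ext (by simp)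
  map_mul' x y := Subtype.ext (by simp; rfl)
  map_zero' := Subtype.ext (by simp)
  map_add' x y := Subtype.ext (by simp; rfl)

lemma toZp_coe {K : Type} [Field K] [NumberField K] (σ : K →ₐ[ℚ] ℚ_[3]) (x : 𝓞 K) :
    (toZp σ x : ℚ_[3]) = σ (x : K) := rfl

noncomputable def psi {K : Type} [Field K] [NumberField K] (σ : K →ₐ[ℚ] ℚ_[3]) :
    𝓞 K →+* ZMod 3 := (PadicInt.toZMod).comp (toZp σ)

lemma psi_apply {K : Type} [Field K] [NumberField K] (σ : K →ₐ[ℚ] ℚ_[3]) (x : 𝓞 K) :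
    psi σ x = PadicInt.toZMod (toZp σ x) := rfl

lemma toZMod_eq_zero_of_norm_lt {z : ℤ_[3]} (h : ‖z‖ < 1) : PadicInt.toZMod z = 0 := by
  have hz : z ∈ RingHom.ker (PadicInt.toZMod : ℤ_[3] →+* ZMod 3) := by
    rw [PadicInt.ker_toZMod, IsLocalRing.mem_maximalIdeal, mem_nonunits_iff, PadicInt.isUnit_iff]
    exact ne_of_lt h
  exact hz

lemma toZMod_eq_of_norm_lt {z w : ℤ_[3]} (h : ‖z - w‖ < 1) :
    PadicInt.toZMod z = PadicInt.toZMod w := by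
  have h2 := toZMod_eq_zero_of_norm_lt h
  rw [map_sub, sub_eq_zero] at h2; exact h2

lemma norm_int_eq_one {k : ℤ} (h : ¬ (3:ℤ) ∣ k) : ‖(k : ℤ_[3])‖ = 1 := by
  refine le_antisymm (PadicInt.norm_le_one _) ?_
  by_contra hlt
  push_neg at hlt
  exact h (by exact_mod_cast (PadicInt.norm_int_lt_one_iff_dvd _).mp hlt)

lemma norm_int_lt_one {k : ℤ} (h : (3:ℤ) ∣ k) : ‖(k : ℤ_[3])‖ < 1 :=
  (PadicInt.norm_int_lt_one_iff_dvd _).mpr (by exact_mod_cast h)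

lemma hensel_G (a b' c' t : ℤ)
    (h1 : (3:ℤ) ∣ (3*t^4 + a*t^3 + b'*t + 3*c'))
    (h2 : ¬ (3:ℤ) ∣ (12*t^3 + 3*a*t^2 + b')) :
    ∃ y : ℤ_[3], 3*y^4 + (a:ℤ_[3])*y^3 + (b':ℤ_[3])*y + 3*(c':ℤ_[3]) = 0
      ∧ ‖y - (t:ℤ_[3])‖ < 1 := by
  set G : Polynomial ℤ_[3] :=
    C 3 * X ^ 4 + C (a:ℤ_[3]) * X ^ 3 + C (b':ℤ_[3]) * X + C 3 * C (c':ℤ_[3]) with hG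
  have hev : G.eval (t:ℤ_[3]) = ((3*t^4 + a*t^3 + b'*t + 3*c' : ℤ) : ℤ_[3]) := by
    simp only [hG, eval_add, eval_mul, eval_pow, eval_C, eval_X]; push_cast; ring
  have hdev : G.derivative.eval (t:ℤ_[3]) = ((12*t^3 + 3*a*t^2 + b' : ℤ) : ℤ_[3]) := by
    simp only [hG, derivative_add, derivative_mul, derivative_C, derivative_X_pow,
      derivative_X, eval_add, eval_mul, eval_pow, eval_C, eval_X, eval_zero, eval_one]
    push_cast; ring
  have hd1 : ‖G.derivative.eval (t:ℤ_[3])‖ = 1 := by rw [hdev]; exact norm_int_eq_one h2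
  have hnorm : ‖G.eval (t:ℤ_[3])‖ < ‖G.derivative.eval (t:ℤ_[3])‖ ^ 2 := by
    rw [hd1, hev, one_pow]; exact norm_int_lt_one h1
  obtain ⟨z, hz0, hz1, -, -⟩ := hensels_lemma hnorm
  refine ⟨z, ?_, by rwa [coe_aeval_eq_eval, hd1] at hz1⟩
  rw [hG] at hz0
  rw [coe_aeval_eq_eval] at hz0; simp only [eval_add, eval_mul, eval_pow, eval_C, eval_X] at hz0
  linear_combination hz0

lemma hensel_P (a b' c' : ℤ) (hna : ¬ (3:ℤ) ∣ a)
    (hdvd : (3:ℤ) ∣ (81*c' - 9*a*b')) :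
    ∃ r : ℤ_[3], r^4 + (a:ℤ_[3])*r^3 + 9*(b':ℤ_[3])*r + 81*(c':ℤ_[3]) = 0
      ∧ ‖r + (a:ℤ_[3])‖ < 1 := by
  set P : Polynomial ℤ_[3] :=
    X ^ 4 + C (a:ℤ_[3]) * X ^ 3 + C ((9*b' : ℤ):ℤ_[3]) * X + C ((81*c' : ℤ):ℤ_[3]) with hP
  have hev : P.eval (-(a:ℤ_[3])) = ((81*c' - 9*a*b' : ℤ) : ℤ_[3]) := by
    simp only [hP, eval_add, eval_mul, eval_pow, eval_C, eval_X]; push_cast; ring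
  have hdev : P.derivative.eval (-(a:ℤ_[3])) = ((9*b' - a^3 : ℤ) : ℤ_[3]) := by
    simp only [hP, derivative_add, derivative_mul, derivative_C, derivative_X_pow,
      derivative_X, eval_add, eval_mul, eval_pow, eval_C, eval_X, eval_zero, eval_one]
    push_cast; ring
  have hnd : ¬ (3:ℤ) ∣ (9*b' - a^3) := by
    intro h
    have h9 : (3:ℤ) ∣ 9*b' := ⟨3*b', by ring⟩
    have ha3 : (3:ℤ) ∣ a^3 := by
      have := dvd_sub h9 h
      simpa using this
    exact hna (Int.Prime.dvd_pow' (by norm_num) ha3)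
  have hd1 : ‖P.derivative.eval (-(a:ℤ_[3]))‖ = 1 := by rw [hdev]; exact norm_int_eq_one hnd
  have hnorm : ‖P.eval (-(a:ℤ_[3]))‖ < ‖P.derivative.eval (-(a:ℤ_[3]))‖ ^ 2 := by
    rw [hd1, hev, one_pow]; exact norm_int_lt_one hdvd
  obtain ⟨z, hz0, hz1, -, -⟩ := hensels_lemma hnorm
  refine ⟨z, ?_, by rw [coe_aeval_eq_eval, hd1] at hz1; simpa [sub_neg_eq_add] using hz1⟩
  rw [hP] at hz0
  rw [coe_aeval_eq_eval] at hz0; simp only [eval_add, eval_mul, eval_pow, eval_C, eval_X] at hz0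
  push_cast at hz0
  linear_combination hz0

/-- Two ring homs to `ZMod 3` that agree on `θ` agree on `Algebra.adjoin ℤ {θ}`. -/
lemma agree_on_adjoin {K : Type} [Field K] [NumberField K]
    (ψ ψ' : 𝓞 K →+* ZMod 3) (θ : 𝓞 K) (h : ψ θ = ψ' θ) :
    ∀ y ∈ Algebra.adjoin ℤ {θ}, ψ y = ψ' y := by
  intro y hy
  induction hy using Algebra.adjoin_induction with
  | mem z hz => rw [Set.mem_singleton_iff.mp hz]; exact h
  | algebraMap r => simp [Algebra.algebraMap_eq_smul_one, map_zsmul]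
  | add u v _ _ hu hv => rw [map_add, map_add, hu, hv]
  | mul u v _ _ hu hv => rw [map_mul, map_mul, hu, hv]

/-- Main abstract lemma: four distinct ring homs `𝓞 K →+* ZMod 3` give the conclusion. -/
lemma main_of_homs {K : Type} [Field K] [NumberField K]
    (ψ : Fin 4 → (𝓞 K →+* ZMod 3)) (hinj : Function.Injective ψ) :
    (∀ θ : 𝓞 K, Algebra.adjoin ℚ {(θ : K)} = ⊤ → 3 ∣ zIndex θ) ∧
      ¬ ∃ θ : 𝓞 K, Algebra.adjoin ℤ {θ} = ⊤ := by
  constructor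
  · intro θ _
    by_contra h3
    obtain ⟨i, j, hne, hij⟩ :=
      Fintype.exists_ne_map_eq_of_card_lt (fun i : Fin 4 => ψ i θ)
        (by simp)
    refine hne (hinj ?_)
    ext x
    have hmem : zIndex θ • x ∈ Algebra.adjoin ℤ {θ} :=
      ((Algebra.adjoin ℤ {θ}).toSubring.toAddSubgroup).nsmul_index_mem x
    have hval := agree_on_adjoin (ψ i) (ψ j) θ hij _ hmem
    rw [map_nsmul, map_nsmul, nsmul_eq_mul, nsmul_eq_mul] at hval
    have hn3 : ((zIndex θ : ℕ) : ZMod 3) ≠ 0 := by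
      rw [Ne, ZMod.natCast_eq_zero_iff]; exact h3
    exact mul_left_cancel₀ hn3 hval
  · rintro ⟨θ, hθ⟩
    obtain ⟨i, j, hne, hij⟩ :=
      Fintype.exists_ne_map_eq_of_card_lt (fun i : Fin 4 => ψ i θ)
        (by simp)
    refine hne (hinj ?_)
    ext x
    exact agree_on_adjoin (ψ i) (ψ j) θ hij x (hθ ▸ Algebra.mem_top)

end Stmt5Aux

set_option maxHeartbeats 2000000 in
open Stmt5Aux in
theorem stmt5 (a b c : ℤ) (ha : a % 3 = 1 ∨ a % 3 = 2)
    (hb : b % 27 = 9 ∨ b % 27 = 18) (hc : c % 81 = 0)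
    (hb3 : (b / 3 ^ padicValInt 3 b + a) % 3 = 0)
    (hval : 3 * padicValInt 3 b < 2 * padicValInt 3 c)
    (hirr : Irreducible ((X ^ 4 + C a * X ^ 3 + C b * X + C c : ℤ[X]).map (Int.castRingHom ℚ)))
    (K : Type) [Field K] [NumberField K] (α : K)
    (hroot : (Polynomial.aeval α) (X ^ 4 + C a * X ^ 3 + C b * X + C c : ℤ[X]) = 0)
    (hgen : Algebra.adjoin ℚ {α} = ⊤) :
    (∀ θ : 𝓞 K, Algebra.adjoin ℚ {(θ : K)} = ⊤ → 3 ∣ zIndex θ) ∧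
      ¬ ∃ θ : 𝓞 K, Algebra.adjoin ℤ {θ} = ⊤ := by
  clear hval
  -- extract integer data
  obtain ⟨b', rfl⟩ : (9:ℤ) ∣ b := by omega
  obtain ⟨c', rfl⟩ : (81:ℤ) ∣ c := by omega
  have hb'nd : ¬ (3:ℤ) ∣ b' := by omega
  have hna : ¬ (3:ℤ) ∣ a := by omega
  have hv2 : padicValInt 3 (9*b') = 2 := by
    have h2 : (3:ℤ)^2 ∣ 9*b' := ⟨b', by ring⟩
    have h3 : ¬ (3:ℤ)^3 ∣ 9*b' := by
      intro ⟨k, hk⟩; exact hb'nd ⟨k, by linarith [hk]⟩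
    have hbne : ¬ ((9:ℤ)*b' = 0) := by omega
    have hge2 : 2 ≤ padicValInt 3 (9*b') := by
      rcases (padicValInt_dvd_iff 2 (9*b')).mp h2 with h | h
      · omega
      · exact h
    have hlt3 : ¬ 3 ≤ padicValInt 3 (9*b') :=
      fun hge3 => h3 ((padicValInt_dvd_iff 3 _).mpr (Or.inr hge3))
    omega
  rw [hv2] at hb3
  have hdiv : (9*b') / (3:ℤ)^2 = b' := by norm_num
  rw [hdiv] at hb3
  have hbadd : (3:ℤ) ∣ (b' + a) := by omega
  -- the roots in ℤ_[3]
  obtain ⟨y1, hy1eq, hy1near⟩ := hensel_G a b' c' 1 (by omega) (by omega)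
  obtain ⟨y2, hy2eq, hy2near⟩ := hensel_G a b' c' (-1)
    (by ring_nf; omega) (by ring_nf; omega)
  obtain ⟨y3, hy3eq, hy3near⟩ := hensel_G a b' c' 0 (by omega) (by simpa using hb'nd)
  obtain ⟨r4, hr4eq, hr4near⟩ := hensel_P a b' c' hna ⟨27*c' - 3*a*b', by ring⟩
  -- the minimal polynomial and power basis
  set F : ℤ[X] := X ^ 4 + C a * X ^ 3 + C (9*b') * X + C (81*c') with hF
  have hFmonic : F.Monic := by unfold F; monicity!
  have hmapmonic : (F.map (Int.castRingHom ℚ)).Monic := hFmonic.map _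
  have haev : aeval α (F.map (Int.castRingHom ℚ)) = 0 := by
    rwa [show (Int.castRingHom ℚ) = algebraMap ℤ ℚ from rfl, aeval_map_algebraMap]
  have hmin : minpoly ℚ α = F.map (Int.castRingHom ℚ) :=
    (minpoly.eq_of_irreducible_of_monic hirr haev hmapmonic).symm
  have hintQ : IsIntegral ℚ α := ⟨F.map (Int.castRingHom ℚ), hmapmonic, haev⟩
  let pb0 := Algebra.adjoin.powerBasis hintQ
  let e : Algebra.adjoin ℚ {α} ≃ₐ[ℚ] K :=
    (Subalgebra.equivOfEq _ _ hgen).trans Subalgebra.topEquiv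
  let pb : PowerBasis ℚ K := pb0.map e
  have hgenpb : pb.gen = α := by
    simp [pb, pb0, e, Algebra.adjoin.powerBasis]
  -- roots give algebra maps
  have haevr : ∀ r : ℤ_[3], r^4 + (a:ℤ_[3])*r^3 + 9*(b':ℤ_[3])*r + 81*(c':ℤ_[3]) = 0 →
      aeval ((r : ℚ_[3])) (minpoly ℚ pb.gen) = 0 := by
    intro r hr
    rw [hgenpb, hmin, show (Int.castRingHom ℚ) = algebraMap ℤ ℚ from rfl,
      aeval_map_algebraMap, hF]
    have hc2 := congrArg (fun z : ℤ_[3] => (z : ℚ_[3])) hr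
    push_cast [show ((9:ℤ_[3]):ℚ_[3]) = 9 from rfl, show ((81:ℤ_[3]):ℚ_[3]) = 81 from rfl] at hc2
    simp only [map_add, map_mul, map_pow, aeval_X, aeval_C, algebraMap_int_eq, eq_intCast,
      map_intCast, map_ofNat]
    push_cast
    linear_combination hc2
  have hrt1 : (3*y1)^4 + (a:ℤ_[3])*(3*y1)^3 + 9*(b':ℤ_[3])*(3*y1) + 81*(c':ℤ_[3]) = 0 := by
    linear_combination (27 : ℤ_[3]) * hy1eq
  have hrt2 : (3*y2)^4 + (a:ℤ_[3])*(3*y2)^3 + 9*(b':ℤ_[3])*(3*y2) + 81*(c':ℤ_[3]) = 0 := by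
    linear_combination (27 : ℤ_[3]) * hy2eq
  have hrt3 : (3*y3)^4 + (a:ℤ_[3])*(3*y3)^3 + 9*(b':ℤ_[3])*(3*y3) + 81*(c':ℤ_[3]) = 0 := by
    linear_combination (27 : ℤ_[3]) * hy3eq
  let σ1 : K →ₐ[ℚ] ℚ_[3] := pb.lift (((3*y1 : ℤ_[3]) : ℚ_[3])) (haevr _ hrt1)
  let σ2 : K →ₐ[ℚ] ℚ_[3] := pb.lift (((3*y2 : ℤ_[3]) : ℚ_[3])) (haevr _ hrt2)
  let σ3 : K →ₐ[ℚ] ℚ_[3] := pb.lift (((3*y3 : ℤ_[3]) : ℚ_[3])) (haevr _ hrt3)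
  let σ4 : K →ₐ[ℚ] ℚ_[3] := pb.lift ((r4 : ℚ_[3])) (haevr _ hr4eq)
  have hσ1α : σ1 α = ((3*y1 : ℤ_[3]) : ℚ_[3]) := by rw [← hgenpb]; exact pb.lift_gen ..
  have hσ2α : σ2 α = ((3*y2 : ℤ_[3]) : ℚ_[3]) := by rw [← hgenpb]; exact pb.lift_gen ..
  have hσ3α : σ3 α = ((3*y3 : ℤ_[3]) : ℚ_[3]) := by rw [← hgenpb]; exact pb.lift_gen ..
  have hσ4α : σ4 α = (r4 : ℚ_[3]) := by rw [← hgenpb]; exact pb.lift_gen ..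
  -- the two integral elements α and γ = (α² + aα)/3
  have hroot' : α^4 + (a:K)*α^3 + 9*(b':K)*α + 81*(c':K) = 0 := by
    have h := hroot
    rw [hF] at h
    simp only [map_add, map_mul, map_pow, aeval_X, aeval_C, algebraMap_int_eq, eq_intCast,
      map_intCast, map_ofNat] at h
    push_cast at h
    linear_combination h
  have hαint : IsIntegral ℤ α := ⟨F, hFmonic, by rw [← aeval_def]; exact hroot⟩
  set αO : 𝓞 K := ⟨α, hαint⟩ with hαO
  set γK : K := (α^2 + (a:K)*α)/3 with hγK
  have key : (α^2 + (a:K)*α)^4 + 9*(18*(c':K) + (a:K)*(b':K))*(α^2+(a:K)*α)^2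
      + 27*(3*(a:K)^2*(c':K) - 3*(b':K)^2)*(α^2+(a:K)*α)
      + 81*(81*(c':K)^2 - 9*(a:K)*(b':K)*(c':K)) = 0 := by
    linear_combination (((a:K)+α)^4 - (a:K)*((a:K)+α)^3 - 9*(b':K)*((a:K)+α) + 81*(c':K)) * hroot'
  have hQ : aeval γK (X^4 + C (18*c' + a*b') * X^2 + C (3*a^2*c' - 3*b'^2) * X
      + C (81*c'^2 - 9*a*b'*c') : ℤ[X]) = 0 := by
    simp only [map_add, map_mul, map_pow, aeval_X, aeval_C, algebraMap_int_eq, eq_intCast,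
      map_intCast, map_ofNat]
    push_cast
    rw [hγK]
    field_simp
    linear_combination key
  have hγint : IsIntegral ℤ γK := by
    refine ⟨X^4 + C (18*c' + a*b') * X^2 + C (3*a^2*c' - 3*b'^2) * X
      + C (81*c'^2 - 9*a*b'*c'), ?_, ?_⟩
    · monicity!
    · rw [← aeval_def]; exact hQ
  set γO : 𝓞 K := ⟨γK, hγint⟩ with hγO
  -- residues of the roots
  have h3z : PadicInt.toZMod (3:ℤ_[3]) = 0 := by
    rw [show (3:ℤ_[3]) = ((3:ℕ):ℤ_[3]) from by norm_num, map_natCast]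
    decide
  have hy1mod : PadicInt.toZMod y1 = 1 := by
    have h := toZMod_eq_of_norm_lt (z := y1) (w := 1) (by simpa using hy1near)
    simpa using h
  have hy2mod : PadicInt.toZMod y2 = -1 := by
    have h := toZMod_eq_of_norm_lt (z := y2) (w := -1) (by push_cast at hy2near; simpa using hy2near)
    simpa using h
  have hy3mod : PadicInt.toZMod y3 = 0 :=
    toZMod_eq_zero_of_norm_lt (z := y3) (by simpa using hy3near)
  have hr4mod : PadicInt.toZMod r4 = -(a : ZMod 3) := by
    have h := toZMod_eq_of_norm_lt (z := r4) (w := -(a:ℤ_[3]))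
      (by simpa [sub_neg_eq_add] using hr4near)
    rw [h, map_neg, map_intCast]
  -- values of the residue maps on αO
  have hψα1 : psi σ1 αO = 0 := by
    rw [psi_apply, show toZp σ1 αO = 3*y1 from Subtype.ext (by rw [toZp_coe]; exact hσ1α),
      map_mul, h3z, zero_mul]
  have hψα2 : psi σ2 αO = 0 := by
    rw [psi_apply, show toZp σ2 αO = 3*y2 from Subtype.ext (by rw [toZp_coe]; exact hσ2α),
      map_mul, h3z, zero_mul]
  have hψα3 : psi σ3 αO = 0 := by
    rw [psi_apply, show toZp σ3 αO = 3*y3 from Subtype.ext (by rw [toZp_coe]; exact hσ3α),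
      map_mul, h3z, zero_mul]
  have hψα4 : psi σ4 αO = -(a : ZMod 3) := by
    rw [psi_apply, show toZp σ4 αO = r4 from Subtype.ext (by rw [toZp_coe]; exact hσ4α), hr4mod]
  -- values of the residue maps on γO
  have hσγ : ∀ (σ : K →ₐ[ℚ] ℚ_[3]) (y : ℤ_[3]), σ α = ((3*y:ℤ_[3]):ℚ_[3]) →
      σ γK = ((3*y^2 + (a:ℤ_[3])*y : ℤ_[3]) : ℚ_[3]) := by
    intro σ y hσ
    rw [hγK, map_div₀, map_add, map_pow, map_mul, map_intCast, map_ofNat, hσ]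
    push_cast [show ((3:ℤ_[3]):ℚ_[3]) = 3 from rfl]
    field_simp
  have hψγ1 : psi σ1 γO = (a : ZMod 3) := by
    rw [psi_apply, show toZp σ1 γO = 3*y1^2 + (a:ℤ_[3])*y1 from
      Subtype.ext (by rw [toZp_coe]; exact hσγ σ1 y1 hσ1α)]
    simp [map_add, map_mul, map_pow, h3z, hy1mod, map_intCast]
  have hψγ2 : psi σ2 γO = -(a : ZMod 3) := by
    rw [psi_apply, show toZp σ2 γO = 3*y2^2 + (a:ℤ_[3])*y2 from
      Subtype.ext (by rw [toZp_coe]; exact hσγ σ2 y2 hσ2α)]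
    simp [map_add, map_mul, map_pow, h3z, hy2mod, map_intCast]
  have hψγ3 : psi σ3 γO = 0 := by
    rw [psi_apply, show toZp σ3 γO = 3*y3^2 + (a:ℤ_[3])*y3 from
      Subtype.ext (by rw [toZp_coe]; exact hσγ σ3 y3 hσ3α)]
    simp [map_add, map_mul, map_pow, h3z, hy3mod, map_intCast]
  -- norms around r4
  have hanorm : ‖(a:ℤ_[3])‖ = 1 := norm_int_eq_one hna
  have hr4unit : ‖r4‖ = 1 := by
    have hle : ‖r4 + (a:ℤ_[3])‖ ≤ 1 := le_of_lt hr4near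
    have hne : ‖r4 + (a:ℤ_[3])‖ ≠ ‖-(a:ℤ_[3])‖ := by
      rw [norm_neg, hanorm]; exact ne_of_lt hr4near
    have h1 : r4 = (r4 + (a:ℤ_[3])) + (-(a:ℤ_[3])) := by ring
    rw [h1, PadicInt.norm_add_eq_max_of_ne hne, norm_neg, hanorm, max_eq_right hle]
  have hr4a : ‖r4 + (a:ℤ_[3])‖ ≤ 1/9 := by
    have heq : (r4*r4*r4) * (r4 + (a:ℤ_[3])) = -(9*(b':ℤ_[3])*r4 + 81*(c':ℤ_[3])) := by
      linear_combination hr4eq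
    have hL : ‖(r4*r4*r4) * (r4 + (a:ℤ_[3]))‖ = ‖r4 + (a:ℤ_[3])‖ := by
      rw [norm_mul, norm_mul, norm_mul, hr4unit]
      ring
    have h9b : ‖9*(b':ℤ_[3])*r4‖ ≤ 1/9 := by
      have hc1 : (9:ℤ_[3])*(b':ℤ_[3]) = ((9*b' : ℤ) : ℤ_[3]) := by push_cast; ring
      rw [norm_mul, hc1, hr4unit, mul_one]
      have := (PadicInt.norm_int_le_pow_iff_dvd (p := 3) (k := 9*b') (n := 2)).mpr
        ⟨b', by ring⟩
      calc ‖((9*b' : ℤ) : ℤ_[3])‖ ≤ (3:ℝ)^(-(2:ℕ):ℤ) := this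
        _ = 1/9 := by norm_num
    have h81c : ‖(81:ℤ_[3])*(c':ℤ_[3])‖ ≤ 1/9 := by
      have hc1 : (81:ℤ_[3])*(c':ℤ_[3]) = ((81*c' : ℤ) : ℤ_[3]) := by push_cast; ring
      rw [hc1]
      have := (PadicInt.norm_int_le_pow_iff_dvd (p := 3) (k := 81*c') (n := 2)).mpr
        ⟨9*c', by ring⟩
      calc ‖((81*c' : ℤ) : ℤ_[3])‖ ≤ (3:ℝ)^(-(2:ℕ):ℤ) := this
        _ = 1/9 := by norm_num
    calc ‖r4 + (a:ℤ_[3])‖ = ‖(r4*r4*r4) * (r4 + (a:ℤ_[3]))‖ := hL.symm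
      _ = ‖9*(b':ℤ_[3])*r4 + 81*(c':ℤ_[3])‖ := by rw [heq, norm_neg]
      _ ≤ max ‖9*(b':ℤ_[3])*r4‖ ‖(81:ℤ_[3])*(c':ℤ_[3])‖ := PadicInt.nonarchimedean _ _
      _ ≤ 1/9 := max_le h9b h81c
  have hψγ4 : psi σ4 γO = 0 := by
    rw [psi_apply]
    apply toZMod_eq_zero_of_norm_lt
    have hco : ((toZp σ4 γO : ℤ_[3]) : ℚ_[3]) = ((r4*(r4+(a:ℤ_[3])) : ℤ_[3]) : ℚ_[3]) / 3 := by
      rw [toZp_coe, show ((γO : 𝓞 K) : K) = γK from rfl, hγK, map_div₀, map_add, map_pow,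
        map_mul, map_intCast, map_ofNat, hσ4α]
      push_cast
      ring
    have hval3 : ‖((3:ℚ_[3]))‖ = (3:ℝ)⁻¹ := by
      rw [show ((3:ℚ_[3])) = (((3:ℕ)):ℚ_[3]) from by norm_num]
      exact_mod_cast Padic.norm_p (p := 3)
    have hnw : ‖toZp σ4 γO‖ = ‖r4*(r4+(a:ℤ_[3]))‖ * 3 := by
      rw [PadicInt.norm_def, hco, norm_div, PadicInt.padic_norm_e_of_padicInt, hval3]
      field_simp
    rw [hnw, norm_mul, hr4unit, one_mul]
    linarith [hr4a]
  -- the residue maps are pairwise distinct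
  have hA0 : (a : ZMod 3) ≠ 0 := by
    rw [Ne, ZMod.intCast_zmod_eq_zero_iff_dvd]; exact_mod_cast hna
  have hAneg : (a : ZMod 3) ≠ -(a : ZMod 3) := by
    intro h
    have h2 : (2 : ZMod 3) * (a : ZMod 3) = 0 := by linear_combination h
    rcases mul_eq_zero.mp h2 with h' | h'
    · exact absurd h' (by decide)
    · exact hA0 h'
  have hA0' : (0 : ZMod 3) ≠ -(a:ZMod 3) := fun h => hA0 (neg_eq_zero.mp h.symm)
  have hne12 : psi σ1 ≠ psi (K := K) σ2 := by
    intro h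
    exact hAneg (calc (a : ZMod 3) = psi σ1 γO := hψγ1.symm
      _ = psi σ2 γO := by rw [h]
      _ = -(a : ZMod 3) := hψγ2)
  have hne13 : psi σ1 ≠ psi (K := K) σ3 := by
    intro h
    exact hA0 (calc (a : ZMod 3) = psi σ1 γO := hψγ1.symm
      _ = psi σ3 γO := by rw [h]
      _ = 0 := hψγ3)
  have hne14 : psi σ1 ≠ psi (K := K) σ4 := by
    intro h
    exact hA0 (calc (a : ZMod 3) = psi σ1 γO := hψγ1.symm
      _ = psi σ4 γO := by rw [h]
      _ = 0 := hψγ4)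
  have hne23 : psi σ2 ≠ psi (K := K) σ3 := by
    intro h
    refine hA0 (neg_eq_zero.mp ?_)
    calc -(a : ZMod 3) = psi σ2 γO := hψγ2.symm
      _ = psi σ3 γO := by rw [h]
      _ = 0 := hψγ3
  have hne24 : psi σ2 ≠ psi (K := K) σ4 := by
    intro h
    refine hA0 (neg_eq_zero.mp ?_)
    calc -(a : ZMod 3) = psi σ2 γO := hψγ2.symm
      _ = psi σ4 γO := by rw [h]
      _ = 0 := hψγ4
  have hne34 : psi σ3 ≠ psi (K := K) σ4 := by
    intro h
    exact hA0' (calc (0 : ZMod 3) = psi σ3 αO := hψα3.symm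
      _ = psi σ4 αO := by rw [h]
      _ = -(a : ZMod 3) := hψα4)
  set Ψ : Fin 4 → (𝓞 K →+* ZMod 3) := ![psi σ1, psi σ2, psi σ3, psi σ4] with hΨ
  have hinj : Function.Injective Ψ := by
    intro i j hij
    fin_cases i <;> fin_cases j <;>
      simp only [hΨ, Matrix.cons_val_zero, Matrix.cons_val_one, Matrix.head_cons,
        Matrix.cons_val_two, Matrix.tail_cons, Matrix.cons_val_three] at hij ⊢ <;>
      first
        | rfl
        | exact absurd hij hne12 | exact absurd hij.symm hne12
        | exact absurd hij hne13 | exact absurd hij.symm hne13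
        | exact absurd hij hne14 | exact absurd hij.symm hne14
        | exact absurd hij hne23 | exact absurd hij.symm hne23
        | exact absurd hij hne24 | exact absurd hij.symm hne24
        | exact absurd hij hne34 | exact absurd hij.symm hne34
  exact main_of_homs Ψ hinj
end

section
/- Let F(x) = x^4 + a·x^3 + b·x + c ∈ ℤ[x] and suppose there exists a prime p with min(4·v_p(a), (4/3)·v_p(b)) > v_p(c) > 2 (interpreting v_p(0) = +∞). Then F is irreducible over ℚ. -/
open Polynomial

lemma monic_quad_rep (G : ℤ[X]) (hG : G.Monic) (h2 : G.natDegree = 2) :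
    G = X^2 + C (G.coeff 1) * X + C (G.coeff 0) := by
  ext k
  have hc2 : G.coeff 2 = 1 := by
    have := hG.coeff_natDegree; rwa [h2] at this
  simp only [coeff_add, coeff_C_mul, coeff_C, coeff_X_pow, coeff_X]
  match k with
  | 0 => norm_num
  | 1 => norm_num
  | 2 => norm_num [hc2]
  | (k+3) =>
    rw [coeff_eq_zero_of_natDegree_lt (by omega)]
    have h3 : ¬(k+3 = 2) := by omega
    have h1 : ¬(k+3 = 1) := by omega
    have h0 : ¬(k+3 = 0) := by omega
    simp [h3, h1, h0]

section val
variable {p : ℕ} [hp : Fact p.Prime]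

lemma pv_dvd {x : ℤ} {k : ℕ} (h : k ≤ padicValInt p x) : (p:ℤ)^k ∣ x :=
  (padicValInt_dvd_iff k x).mpr (Or.inr h)

lemma pv_not_dvd {x : ℤ} (hx : x ≠ 0) : ¬ (p:ℤ)^(padicValInt p x + 1) ∣ x := by
  intro h
  rcases (padicValInt_dvd_iff _ x).mp h with h | h
  · exact hx h
  · omega

lemma pv_add {x y : ℤ} (hx : x ≠ 0) (hy : (p:ℤ)^(padicValInt p x + 1) ∣ y) :
    x + y ≠ 0 ∧ padicValInt p (x + y) = padicValInt p x := by
  have key : ∀ z : ℤ, (p:ℤ)^(padicValInt p x + 1) ∣ z → x + y ≠ z := by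
    intro z hz h
    have : (p:ℤ)^(padicValInt p x + 1) ∣ x := by
      have : (p:ℤ)^(padicValInt p x + 1) ∣ (x + y) - y := by
        rw [h]; exact dvd_sub hz hy
      simpa using this
    exact pv_not_dvd hx this
  have hne : x + y ≠ 0 := key 0 (dvd_zero _)
  refine ⟨hne, le_antisymm ?_ ?_⟩
  · by_contra h
    push_neg at h
    exact key (x+y) (pv_dvd h) rfl
  · have hd : (p:ℤ)^(padicValInt p x) ∣ x + y := by
      have h1 : (p:ℤ)^(padicValInt p x) ∣ x := padicValInt_dvd x
      have h2 : (p:ℤ)^(padicValInt p x) ∣ y := dvd_trans (pow_dvd_pow _ (Nat.le_succ _)) hy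
      exact dvd_add h1 h2
    rcases (padicValInt_dvd_iff (padicValInt p x) (x+y)).mp hd with h | h
    · exact absurd h hne
    · exact h

lemma pv_neg (x : ℤ) : padicValInt p (-x) = padicValInt p x := by
  simp [padicValInt]

lemma pv_pow {x : ℤ} (hx : x ≠ 0) (k : ℕ) : padicValInt p (x ^ k) = k * padicValInt p x := by
  induction k with
  | zero => simp [padicValInt]
  | succ k ih =>
    rw [pow_succ, padicValInt.mul (pow_ne_zero _ hx) hx, ih]; ring

lemma no_root (a b c : ℤ) (hc0 : c ≠ 0)
    (ha : a = 0 ∨ padicValInt p c < 4 * padicValInt p a)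
    (hb : b = 0 ∨ 3 * padicValInt p c < 4 * padicValInt p b)
    (hc : 2 < padicValInt p c) (hgcd : Nat.gcd (padicValInt p c) 4 = 1)
    (r : ℤ) : r^4 + a*r^3 + b*r + c ≠ 0 := by
  intro h
  have hr0 : r ≠ 0 := by rintro rfl; simp at h; exact hc0 h
  set n := padicValInt p c with hn
  set m := padicValInt p r with hm
  have hr3 : (p:ℤ)^(m*3) ∣ r^3 := by
    rw [pow_mul]; exact pow_dvd_pow_of_dvd (padicValInt_dvd r) 3
  rcases lt_trichotomy (4*m) n with h1 | h1 | h1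
  · -- 4m < n : leading term dominates
    have hdvd : (p:ℤ)^(4*m+1) ∣ a*r^3 + b*r + c := by
      refine dvd_add (dvd_add ?_ ?_) ?_
      · rcases ha with rfl | ha
        · simp
        · rw [show 4*m+1 = (m+1)+(m*3) by ring, pow_add]
          exact mul_dvd_mul (pv_dvd (by omega)) hr3
      · rcases hb with rfl | hb
        · simp
        · rw [show 4*m+1 = (3*m+1)+m by ring, pow_add]
          exact mul_dvd_mul (pv_dvd (by omega)) (padicValInt_dvd r)
      · exact pv_dvd (by omega)
    have hx4 : padicValInt p (r^4) = 4*m := by rw [pv_pow hr0]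
    have := (pv_add (y := a*r^3 + b*r + c) (pow_ne_zero 4 hr0) (by rw [hx4]; exact hdvd)).1
    exact this (by linear_combination h)
  · -- 4m = n contradicts gcd
    have : (4:ℕ) ∣ n.gcd 4 := Nat.dvd_gcd ⟨m, h1.symm⟩ dvd_rfl
    omega
  · -- n < 4m : constant term dominates
    have hdvd : (p:ℤ)^(n+1) ∣ r^4 + a*r^3 + b*r := by
      refine dvd_add (dvd_add ?_ ?_) ?_
      · exact pv_dvd (by rw [pv_pow hr0]; omega)
      · rcases ha with rfl | ha
        · simp
        · have h2 : (p:ℤ)^(padicValInt p a + m*3) ∣ a*r^3 := by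
            rw [pow_add]; exact mul_dvd_mul (padicValInt_dvd a) hr3
          exact dvd_trans (pow_dvd_pow _ (by omega)) h2
      · rcases hb with rfl | hb
        · simp
        · have h2 : (p:ℤ)^(padicValInt p b + m) ∣ b*r := by
            rw [pow_add]; exact mul_dvd_mul (padicValInt_dvd b) (padicValInt_dvd r)
          exact dvd_trans (pow_dvd_pow _ (by omega)) h2
    have := (pv_add (y := r^4 + a*r^3 + b*r) hc0 hdvd).1
    exact this (by linear_combination h)

lemma no_quad_aux (a b c : ℤ) (hc0 : c ≠ 0)
    (ha : a = 0 ∨ padicValInt p c < 4 * padicValInt p a)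
    (hb : b = 0 ∨ 3 * padicValInt p c < 4 * padicValInt p b)
    (u v1 s t : ℤ) (e1 : u + s = a) (e2 : v1 + t + u*s = 0)
    (e3 : u*t + s*v1 = b) (e4 : v1*t = c)
    (hlt : padicValInt p v1 < padicValInt p t) : False := by
  have hv1 : v1 ≠ 0 := fun h => hc0 (by rw [← e4, h, zero_mul])
  have ht : t ≠ 0 := fun h => hc0 (by rw [← e4, h, mul_zero])
  set n := padicValInt p c with hn
  set α := padicValInt p v1 with hα
  set β := padicValInt p t with hβ
  have hαβ : α + β = n := by rw [hn, ← e4, padicValInt.mul hv1 ht]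
  have hu0 : u ≠ 0 := by
    rintro rfl
    have : v1 = -t := by linear_combination e2
    rw [hα, this, pv_neg] at hlt; omega
  have hs0 : s ≠ 0 := by
    rintro rfl
    have : v1 = -t := by linear_combination e2
    rw [hα, this, pv_neg] at hlt; omega
  set μ := padicValInt p u with hμ
  set σ := padicValInt p s with hσ
  -- μ + σ = α
  have hus : u * s = -(v1 + t) := by linear_combination e2
  have hvt := pv_add (p := p) (y := t) hv1 (pv_dvd (by omega))
  have hμσ : μ + σ = α := by
    rw [hμ, hσ, ← padicValInt.mul hu0 hs0, hus, pv_neg, hvt.2]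
  -- μ = σ
  have hμeσ : μ = σ := by
    by_contra hne
    rcases Nat.lt_or_ge μ σ with h | h
    · have h2 := pv_add (p := p) (y := s) hu0 (pv_dvd (by omega))
      rw [e1] at h2
      rcases ha with rfl | ha
      · exact h2.1 rfl
      · rw [h2.2] at ha; omega
    · have hlt2 : σ < μ := by omega
      have h2 := pv_add (p := p) (y := u) hs0 (pv_dvd (by omega))
      rw [add_comm, e1] at h2
      rcases ha with rfl | ha
      · exact h2.1 rfl
      · rw [h2.2] at ha; omega
  -- b has valuation 3μ, contradiction
  have hsv : padicValInt p (s * v1) = 3 * μ := by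
    rw [padicValInt.mul hs0 hv1, ← hσ, ← hα]; omega
  have hut : (p:ℤ)^(padicValInt p (s*v1) + 1) ∣ u * t := by
    have h2 : (p:ℤ)^(μ + β) ∣ u*t := by
      rw [pow_add]; exact mul_dvd_mul (padicValInt_dvd u) (padicValInt_dvd t)
    exact dvd_trans (pow_dvd_pow _ (by rw [hsv]; omega)) h2
  have h3 := pv_add (mul_ne_zero hs0 hv1) hut
  rw [show s*v1 + u*t = b by linear_combination e3, hsv] at h3
  rcases hb with rfl | hb
  · exact h3.1 rfl
  · rw [h3.2] at hb; omega

lemma no_quad (a b c : ℤ) (hc0 : c ≠ 0)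
    (ha : a = 0 ∨ padicValInt p c < 4 * padicValInt p a)
    (hb : b = 0 ∨ 3 * padicValInt p c < 4 * padicValInt p b)
    (hgcd : Nat.gcd (padicValInt p c) 4 = 1)
    (u v1 s t : ℤ) (e1 : u + s = a) (e2 : v1 + t + u*s = 0)
    (e3 : u*t + s*v1 = b) (e4 : v1*t = c) : False := by
  have hv1 : v1 ≠ 0 := fun h => hc0 (by rw [← e4, h, zero_mul])
  have ht : t ≠ 0 := fun h => hc0 (by rw [← e4, h, mul_zero])
  have hαβ : padicValInt p v1 + padicValInt p t = padicValInt p c := by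
    rw [← e4, padicValInt.mul hv1 ht]
  have hne : padicValInt p v1 ≠ padicValInt p t := by
    intro h
    have h2 : (2:ℕ) ∣ Nat.gcd (padicValInt p c) 4 :=
      Nat.dvd_gcd ⟨padicValInt p t, by omega⟩ ⟨2, rfl⟩
    omega
  rcases Nat.lt_or_ge (padicValInt p v1) (padicValInt p t) with h | h
  · exact no_quad_aux a b c hc0 ha hb u v1 s t e1 e2 e3 e4 h
  · exact no_quad_aux a b c hc0 ha hb s t u v1 (by linarith) (by linear_combination e2)
      (by linear_combination e3) (by linear_combination e4) (by omega)

lemma no_monic_fact (a b c : ℤ) (hc0 : c ≠ 0)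
    (ha : a = 0 ∨ padicValInt p c < 4 * padicValInt p a)
    (hb : b = 0 ∨ 3 * padicValInt p c < 4 * padicValInt p b)
    (hc : 2 < padicValInt p c) (hgcd : Nat.gcd (padicValInt p c) 4 = 1)
    (G H : ℤ[X]) (hG : G.Monic) (hH : H.Monic)
    (hGH : X ^ 4 + C a * X ^ 3 + C b * X + C c = G * H)
    (hdG : G.natDegree = 1 ∨ G.natDegree = 2) : False := by
  have hdeg : (X ^ 4 + C a * X ^ 3 + C b * X + C c : ℤ[X]).natDegree = 4 := by
    compute_degree!
  have hsum : G.natDegree + H.natDegree = 4 := by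
    rw [← hG.natDegree_mul hH, ← hGH, hdeg]
  rcases hdG with hdG | hdG
  · -- linear factor: integer root
    obtain ⟨g0, hGeq⟩ : ∃ g0, G = X + C g0 := ⟨_, hG.eq_X_add_C hdG⟩
    have h2 := congrArg (eval (-g0)) hGH
    rw [hGeq] at h2
    simp only [eval_add, eval_mul, eval_pow, eval_C, eval_X, neg_add_cancel, zero_mul] at h2
    exact no_root a b c hc0 ha hb hc hgcd (-g0) (by linear_combination h2)
  · -- two quadratics
    have hdH : H.natDegree = 2 := by omega
    obtain ⟨u, v1, hGeq⟩ : ∃ u v1, G = X^2 + C u * X + C v1 := ⟨_, _, monic_quad_rep G hG hdG⟩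
    obtain ⟨s, t, hHeq⟩ : ∃ s t, H = X^2 + C s * X + C t := ⟨_, _, monic_quad_rep H hH hdH⟩
    have hexp : G * H = X^4 + C (u+s)*X^3 + C (v1+t+u*s)*X^2 + C (u*t+s*v1)*X + C (v1*t) := by
      rw [hGeq, hHeq]; simp only [map_add, map_mul]; ring
    rw [hexp] at hGH
    have key : ∀ k : ℕ, (X ^ 4 + C a * X ^ 3 + C b * X + C c : ℤ[X]).coeff k =
        (X^4 + C (u+s)*X^3 + C (v1+t+u*s)*X^2 + C (u*t+s*v1)*X + C (v1*t) : ℤ[X]).coeff k :=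
      fun k => by rw [hGH]
    have e3 : u + s = a := by
      have := key 3
      simp only [coeff_add, coeff_C_mul, coeff_C, coeff_X_pow, coeff_X] at this
      norm_num at this
      linarith
    have e2 : v1 + t + u*s = 0 := by
      have := key 2
      simp only [coeff_add, coeff_C_mul, coeff_C, coeff_X_pow, coeff_X] at this
      norm_num at this
      linarith
    have e1 : u*t + s*v1 = b := by
      have := key 1
      simp only [coeff_add, coeff_C_mul, coeff_C, coeff_X_pow, coeff_X] at this
      norm_num at this
      linarith
    have e0 : v1*t = c := by
      have := key 0
      simp only [coeff_add, coeff_C_mul, coeff_C, coeff_X_pow, coeff_X] at this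
      norm_num at this
      linarith
    exact no_quad a b c hc0 ha hb hgcd u v1 s t e3 e2 e1 e0
end val

theorem stmt6 (a b c : ℤ) (p : ℕ) (hp : p.Prime) (hc0 : c ≠ 0)
    (ha : a = 0 ∨ padicValInt p c < 4 * padicValInt p a)
    (hb : b = 0 ∨ 3 * padicValInt p c < 4 * padicValInt p b)
    (hc : 2 < padicValInt p c)
    (hgcd : Nat.gcd (padicValInt p c) 4 = 1) :
    Irreducible ((X ^ 4 + C a * X ^ 3 + C b * X + C c : ℤ[X]).map (Int.castRingHom ℚ)) := by
  haveI : Fact p.Prime := ⟨hp⟩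
  have hdeg : (X ^ 4 + C a * X ^ 3 + C b * X + C c : ℤ[X]).natDegree = 4 := by
    compute_degree!
  have hmon : (X ^ 4 + C a * X ^ 3 + C b * X + C c : ℤ[X]).Monic := by
    unfold Monic leadingCoeff
    rw [hdeg]
    simp only [coeff_add, coeff_C_mul, coeff_C, coeff_X_pow, coeff_X]
    norm_num
  rw [← algebraMap_int_eq]
  refine (hmon.irreducible_iff_irreducible_map_fraction_map).mp ?_
  constructor
  · exact not_isUnit_of_natDegree_pos _ (by omega)
  · intro G H hGH
    by_contra hcon
    push_neg at hcon
    have hG0 : G ≠ 0 := by rintro rfl; rw [zero_mul] at hGH; exact hmon.ne_zero hGH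
    have hH0 : H ≠ 0 := by rintro rfl; rw [mul_zero] at hGH; exact hmon.ne_zero hGH
    have hlc : G.leadingCoeff * H.leadingCoeff = 1 := by
      rw [← leadingCoeff_mul, ← hGH]; exact hmon
    have hsum : G.natDegree + H.natDegree = 4 := by
      rw [← natDegree_mul hG0 hH0, ← hGH, hdeg]
    have hGd0 : G.natDegree ≠ 0 := by
      intro h0
      have hu : IsUnit G.leadingCoeff := IsUnit.of_mul_eq_one _ hlc
      have he : G.leadingCoeff = G.coeff 0 := by rw [leadingCoeff, h0]
      exact hcon.1 (by rw [eq_C_of_natDegree_eq_zero h0]; exact isUnit_C.mpr (he ▸ hu))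
    have hHd0 : H.natDegree ≠ 0 := by
      intro h0
      have hu : IsUnit H.leadingCoeff :=
        IsUnit.of_mul_eq_one _ ((mul_comm _ _).trans hlc)
      have he : H.leadingCoeff = H.coeff 0 := by rw [leadingCoeff, h0]
      exact hcon.2 (by rw [eq_C_of_natDegree_eq_zero h0]; exact isUnit_C.mpr (he ▸ hu))
    obtain ⟨G', H', hG', hH', hGH', hdeq⟩ :
        ∃ G' H' : ℤ[X], G'.Monic ∧ H'.Monic ∧
          X ^ 4 + C a * X ^ 3 + C b * X + C c = G' * H' ∧ G'.natDegree = G.natDegree := by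
      rcases Int.mul_eq_one_iff_eq_one_or_neg_one.mp hlc with ⟨h1, h2⟩ | ⟨h1, h2⟩
      · exact ⟨G, H, h1, h2, hGH, rfl⟩
      · refine ⟨-G, -H, ?_, ?_, by rw [neg_mul_neg]; exact hGH, natDegree_neg G⟩
        · unfold Monic; rw [leadingCoeff_neg, h1, neg_neg]
        · unfold Monic; rw [leadingCoeff_neg, h2, neg_neg]
    have hsum' : G'.natDegree + H'.natDegree = 4 := by
      rw [← hG'.natDegree_mul hH', ← hGH', hdeg]
    rcases (show G'.natDegree = 1 ∨ G'.natDegree = 2 ∨ G'.natDegree = 3 by omega) with h | h | h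
    · exact no_monic_fact a b c hc0 ha hb hc hgcd G' H' hG' hH' hGH' (Or.inl h)
    · exact no_monic_fact a b c hc0 ha hb hc hgcd G' H' hG' hH' hGH' (Or.inr h)
    · exact no_monic_fact a b c hc0 ha hb hc hgcd H' G' hH' hG'
        (hGH'.trans (mul_comm G' H')) (Or.inl (by omega))
end

section
/- Let K be a quartic number field in which a prime p splits completely, i.e., p·O_K = p_1·p_2·p_3·p_4 with distinct prime ideals of residue degree 1, and suppose p ∈ {2, 3}. Then p divides [O_K : ℤ[θ]] for every θ ∈ O_K with ℚ(θ) = K; in particular K is not monogenic. -/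
open Polynomial NumberField

set_option synthInstance.maxHeartbeats 1000000
set_option maxHeartbeats 1000000

lemma key_lemma {K : Type} [Field K] [NumberField K]
    (p : ℕ) (hp : p.Prime) (hplt : p < 4)
    (P : Fin 4 → Ideal (𝓞 K)) (hprime : ∀ i, (P i).IsPrime)
    (hinj : Function.Injective P)
    (hmem : ∀ i, (p : 𝓞 K) ∈ P i) (hnorm : ∀ i, Ideal.absNorm (P i) = p)
    (θ : 𝓞 K) : p ∣ zIndex θ := by
  by_contra h
  have hn0 : zIndex θ ≠ 0 := fun h0 => h (h0 ▸ dvd_zero p)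
  have hcop : IsCoprime (p : ℤ) (zIndex θ : ℤ) :=
    Nat.isCoprime_iff_coprime.mpr (hp.coprime_iff_not_dvd.mpr h)
  obtain ⟨u, v, huv⟩ := hcop
  have hcover : ∀ x : 𝓞 K, ∃ s ∈ Algebra.adjoin ℤ ({θ} : Set (𝓞 K)),
      ∃ y : 𝓞 K, x = s + (p : 𝓞 K) * y := by
    intro x
    have hns : (zIndex θ : ℤ) • x ∈ (Algebra.adjoin ℤ ({θ} : Set (𝓞 K))) := by
      have h1 := ((Algebra.adjoin ℤ ({θ} : Set (𝓞 K))).toSubring.toAddSubgroup).nsmul_index_mem x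
      exact (natCast_zsmul x _) ▸ h1
    refine ⟨v • ((zIndex θ : ℤ) • x), Subalgebra.smul_mem _ hns v, u * x, ?_⟩
    calc x = (u * (p : ℤ) + v * (zIndex θ : ℤ)) • x := by rw [huv, one_smul]
    _ = v • ((zIndex θ : ℤ) • x) + (p : 𝓞 K) * (u * x) := by
        rw [add_smul, mul_smul, mul_smul]
        push_cast [zsmul_eq_mul]
        ring
  -- residue field maps
  have hfin : ∀ i, Finite ((𝓞 K) ⧸ (P i)) := by
    intro i
    have hc : Nat.card ((𝓞 K) ⧸ (P i)) = p := hnorm i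
    exact Nat.finite_of_card_ne_zero (hc ▸ hp.ne_zero)
  haveI inst : ∀ i, Fintype ((𝓞 K) ⧸ (P i)) := fun i => @Fintype.ofFinite _ (hfin i)
  have hcard : ∀ i, Fintype.card ((𝓞 K) ⧸ (P i)) = p := by
    intro i
    rw [← Nat.card_eq_fintype_card]
    exact hnorm i
  haveI : NeZero p := ⟨hp.ne_zero⟩
  let e : ∀ i, ZMod p ≃+* ((𝓞 K) ⧸ (P i)) :=
    fun i => ZMod.ringEquivOfPrime _ hp (hcard i)
  let φ : ∀ i, (𝓞 K) →+* ZMod p :=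
    fun i => ((e i).symm : ((𝓞 K) ⧸ (P i)) →+* ZMod p).comp (Ideal.Quotient.mk (P i))
  have hker : ∀ i (x : 𝓞 K), φ i x = 0 ↔ x ∈ P i := by
    intro i x
    simp only [φ, RingHom.comp_apply]
    rw [show ((e i).symm : ((𝓞 K) ⧸ (P i)) →+* ZMod p) (Ideal.Quotient.mk (P i) x) = 0 ↔
        Ideal.Quotient.mk (P i) x = 0 from map_eq_zero_iff _ (e i).symm.injective,
      Ideal.Quotient.eq_zero_iff_mem]
  have hp0 : ∀ i (y : 𝓞 K), φ i ((p : 𝓞 K) * y) = 0 := by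
    intro i y
    rw [map_mul, map_natCast, ZMod.natCast_self, zero_mul]
  -- if φ i θ = φ j θ then P i = P j
  have hagree : ∀ i j, φ i θ = φ j θ → P i = P j := by
    intro i j hij
    have hext : ∀ x, φ i x = φ j x := by
      have hadj : ∀ s ∈ Algebra.adjoin ℤ ({θ} : Set (𝓞 K)), φ i s = φ j s := by
        intro s hs
        induction hs using Algebra.adjoin_induction with
        | mem x hx => rw [Set.mem_singleton_iff.mp hx]; exact hij
        | algebraMap r => simp [map_intCast]
        | add x y _ _ hx hy => rw [map_add, map_add, hx, hy]
        | mul x y _ _ hx hy => rw [map_mul, map_mul, hx, hy]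
      intro x
      obtain ⟨s, hs, y, rfl⟩ := hcover x
      rw [map_add, map_add, hp0, hp0, hadj s hs]
    apply Ideal.ext
    intro x
    rw [← hker i x, ← hker j x, hext x]
  -- pigeonhole
  have hlt : Fintype.card (ZMod p) < Fintype.card (Fin 4) := by
    rw [ZMod.card, Fintype.card_fin]
    exact hplt
  obtain ⟨i, j, hij, heq⟩ := Fintype.exists_ne_map_eq_of_card_lt (fun i => φ i θ) hlt
  exact hij (hinj (hagree i j heq))

theorem stmt16 (K : Type) [Field K] [NumberField K]
    (hdeg : Module.finrank ℚ K = 4)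
    (p : ℕ) (hp : p.Prime) (hp23 : p = 2 ∨ p = 3)
    (P₁ P₂ P₃ P₄ : Ideal (𝓞 K))
    (h₁ : P₁.IsPrime) (h₂ : P₂.IsPrime) (h₃ : P₃.IsPrime) (h₄ : P₄.IsPrime)
    (hne : P₁ ≠ P₂ ∧ P₁ ≠ P₃ ∧ P₁ ≠ P₄ ∧ P₂ ≠ P₃ ∧ P₂ ≠ P₄ ∧ P₃ ≠ P₄)
    (hsplit : Ideal.span {(p : 𝓞 K)} = P₁ * P₂ * P₃ * P₄)
    (hN₁ : Ideal.absNorm P₁ = p) (hN₂ : Ideal.absNorm P₂ = p)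
    (hN₃ : Ideal.absNorm P₃ = p) (hN₄ : Ideal.absNorm P₄ = p) :
    (∀ θ : 𝓞 K, Algebra.adjoin ℚ {(θ : K)} = ⊤ → p ∣ zIndex θ) ∧
      ¬ ∃ θ : 𝓞 K, Algebra.adjoin ℤ {θ} = ⊤ := by
  obtain ⟨hne12, hne13, hne14, hne23, hne24, hne34⟩ := hne
  let P : Fin 4 → Ideal (𝓞 K) := ![P₁, P₂, P₃, P₄]
  have hprime : ∀ i, (P i).IsPrime := by
    intro i; fin_cases i
    exacts [h₁, h₂, h₃, h₄]
  have hinj : Function.Injective P := by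
    intro i j hij
    fin_cases i <;> fin_cases j <;>
      first
        | rfl
        | exact absurd hij hne12 | exact absurd hij hne13 | exact absurd hij hne14
        | exact absurd hij hne23 | exact absurd hij hne24 | exact absurd hij hne34
        | exact absurd hij.symm hne12 | exact absurd hij.symm hne13
        | exact absurd hij.symm hne14 | exact absurd hij.symm hne23
        | exact absurd hij.symm hne24 | exact absurd hij.symm hne34
  have hmem : ∀ i, (p : 𝓞 K) ∈ P i := by
    have hsub : ∀ i, P₁ * P₂ * P₃ * P₄ ≤ P i := by
      intro i; fin_cases i
      · exact le_trans (le_trans Ideal.mul_le_left Ideal.mul_le_left) Ideal.mul_le_left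
      · exact le_trans (le_trans Ideal.mul_le_left Ideal.mul_le_left) Ideal.mul_le_right
      · exact le_trans Ideal.mul_le_left Ideal.mul_le_right
      · exact Ideal.mul_le_right
    intro i
    exact hsub i (hsplit ▸ Ideal.subset_span (Set.mem_singleton _))
  have hnorm : ∀ i, Ideal.absNorm (P i) = p := by
    intro i; fin_cases i
    exacts [hN₁, hN₂, hN₃, hN₄]
  have hplt : p < 4 := by rcases hp23 with h | h <;> omega
  have key : ∀ θ : 𝓞 K, p ∣ zIndex θ :=
    fun θ => key_lemma p hp hplt P hprime hinj hmem hnorm θ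
  refine ⟨fun θ _ => key θ, ?_⟩
  rintro ⟨θ, hθ⟩
  have : zIndex θ = 1 := by
    rw [zIndex, hθ]
    have h2 : ((⊤ : Subalgebra ℤ (𝓞 K)).toSubring.toAddSubgroup) = ⊤ := by
      ext x; simp [Algebra.mem_top]
    rw [h2, AddSubgroup.index_top]
  exact hp.one_lt.ne' (Nat.dvd_one.mp (this ▸ key θ))
end
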